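/- arXiv:math-ph/0210043 — 3 statements merged into one kernel-verified Lean document; each statement's English description precedes it below -/
import Mathlib

section
/- (Crainic's lemma) Let H be a Hopf algebra with character δ : H → k and twisted antipode S_δ = δ * S. Then S_δ ∘ S_δ = id_H if and only if Σ S_δ(h₍₁₎) h₍₀₎ = δ(h)·1 for all h ∈ H. -/
open TensorProduct

/-- The twisted antipode `S_δ = δ * S` (convolution of the character `δ` with the
antipode `S`), i.e. `S_δ(h) = Σ δ(h₍₀₎) S(h₍₁₎)`. -/
noncomputable def twistedAntipode {k H : Type*} [CommRing k] [Ring H]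
    [HopfAlgebra k H] (δ : H →ₐ[k] k) : H →ₗ[k] H :=
  (TensorProduct.lid k H).toLinearMap ∘ₗ
    (TensorProduct.map δ.toLinearMap (HopfAlgebra.antipode (R := k))) ∘ₗ
    Coalgebra.comul

namespace Crainic

open Coalgebra HopfAlgebra

variable {k H : Type*} [CommRing k] [Ring H] [HopfAlgebra k H]

/-- `tri f g h (x ⊗ (y ⊗ z)) = f x * (g y * h z)`. -/
noncomputable def tri (f g h : H →ₗ[k] H) : H ⊗[k] (H ⊗[k] H) →ₗ[k] H :=
  LinearMap.mul' k H ∘ₗ map f (LinearMap.mul' k H ∘ₗ map g h)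

@[simp] lemma tri_tmul (f g h : H →ₗ[k] H) (x y z : H) :
    tri f g h (x ⊗ₜ (y ⊗ₜ z)) = f x * (g y * h z) := by
  simp [tri]

/-- A representation of `comul (a * b)` built from representations of `a` and `b`. -/
noncomputable def reprMul {ι κ : Type*} {a b : H} (ra : Repr k a ι) (rb : Repr k b κ) :
    Repr k (a * b) (ι × κ) where
  index := ra.index ×ˢ rb.index
  left p := ra.left p.1 * rb.left p.2
  right p := ra.right p.1 * rb.right p.2
  eq := by
    rw [Bialgebra.comul_mul, ← ra.eq, ← rb.eq, Finset.sum_mul_sum, Finset.sum_product]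
    simp [Algebra.TensorProduct.tmul_mul_tmul]

lemma sum_counit_smul {ι : Type*} {a : H} (r : Repr k a ι) :
    ∑ i ∈ r.index, counit (R := k) (r.left i) • r.right i = a := by
  have h := congrArg (TensorProduct.lid k H) (Coalgebra.sum_counit_tmul_eq (R := k) r)
  simp only [map_sum, lid_tmul] at h
  simpa using h

lemma sum_smul_counit {ι : Type*} {a : H} (r : Repr k a ι) :
    ∑ i ∈ r.index, counit (R := k) (r.right i) • r.left i = a := by
  have h := congrArg (TensorProduct.rid k H) (Coalgebra.sum_tmul_counit_eq (R := k) r)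
  simp only [map_sum, rid_tmul] at h
  simpa using h

lemma antipode_one : antipode (R := k) (1 : H) = 1 := by
  have h := mul_antipode_rTensor_comul_apply (R := k) (A := H) 1
  rw [Bialgebra.comul_one, Algebra.TensorProduct.one_def, LinearMap.rTensor_tmul,
    LinearMap.mul'_apply, mul_one, Bialgebra.counit_one] at h
  simpa using h

lemma inner_eps (c : H) {ι κ : Type*} {x y : H} (rx : Repr k x ι) (ry : Repr k y κ) :
    ∑ m ∈ rx.index, ∑ n ∈ ry.index,
      c * (rx.left m * (ry.left n *
        (antipode (R := k) (ry.right n) * antipode (R := k) (rx.right m))))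
      = (counit (R := k) x * counit (R := k) y) • c := by
  have hy : ∀ m, ∑ n ∈ ry.index, ry.left n *
      (antipode (R := k) (ry.right n) * antipode (R := k) (rx.right m))
      = counit (R := k) y • antipode (R := k) (rx.right m) := by
    intro m
    have h1 : ∑ n ∈ ry.index, ry.left n *
        (antipode (R := k) (ry.right n) * antipode (R := k) (rx.right m))
        = (∑ n ∈ ry.index, ry.left n * antipode (R := k) (ry.right n)) *
          antipode (R := k) (rx.right m) := by
      rw [Finset.sum_mul]; simp [mul_assoc]
    rw [h1, sum_mul_antipode_eq_smul ry, smul_mul_assoc, one_mul]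
  calc ∑ m ∈ rx.index, ∑ n ∈ ry.index, c * (rx.left m * (ry.left n *
        (antipode (R := k) (ry.right n) * antipode (R := k) (rx.right m))))
      = ∑ m ∈ rx.index, c * (rx.left m * (counit (R := k) y •
          antipode (R := k) (rx.right m))) := by
        refine Finset.sum_congr rfl fun m _ => ?_
        rw [← Finset.mul_sum, ← Finset.mul_sum, hy m]
    _ = counit (R := k) y • (c * ∑ m ∈ rx.index, rx.left m *
          antipode (R := k) (rx.right m)) := by
        rw [Finset.mul_sum, Finset.smul_sum]
        exact Finset.sum_congr rfl fun m _ => by rw [mul_smul_comm, mul_smul_comm]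
    _ = (counit (R := k) x * counit (R := k) y) • c := by
        rw [sum_mul_antipode_eq_smul rx, mul_smul_comm, smul_smul, mul_one, mul_comm]

lemma inner_eps2 (c : H) {ι κ : Type*} {x y : H} (rx : Repr k x ι) (ry : Repr k y κ) :
    ∑ m ∈ rx.index, ∑ n ∈ ry.index,
      antipode (R := k) (rx.left m * ry.left n) * (rx.right m * (ry.right n * c))
      = (counit (R := k) x * counit (R := k) y) • c := by
  have key := sum_antipode_mul_eq_algebraMap_counit (R := k) (reprMul rx ry)
  simp only [reprMul] at key
  rw [Finset.sum_product] at key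
  calc ∑ m ∈ rx.index, ∑ n ∈ ry.index,
        antipode (R := k) (rx.left m * ry.left n) * (rx.right m * (ry.right n * c))
      = (∑ m ∈ rx.index, ∑ n ∈ ry.index,
          antipode (R := k) (rx.left m * ry.left n) * (rx.right m * ry.right n)) * c := by
        rw [Finset.sum_mul]
        exact Finset.sum_congr rfl fun m _ => by
          rw [Finset.sum_mul]
          exact Finset.sum_congr rfl fun n _ => by rw [mul_assoc, mul_assoc]
    _ = algebraMap k H (counit (R := k) (x * y)) * c := by rw [key]
    _ = (counit (R := k) x * counit (R := k) y) • c := by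
        rw [Bialgebra.counit_mul, Algebra.smul_def]

theorem antipode_mul_antidistrib_aux {ι κ : Type*} {ι₁ ι₂ : ι → Type*} {κ₁ κ₂ : κ → Type*}
    {a b : H} (ra : Repr k a ι) (rb : Repr k b κ)
    (la : ∀ i, Repr k (ra.left i) (ι₁ i)) (ra' : ∀ i, Repr k (ra.right i) (ι₂ i))
    (lb : ∀ j, Repr k (rb.left j) (κ₁ j)) (rb' : ∀ j, Repr k (rb.right j) (κ₂ j)) :
    antipode (R := k) (a * b) = antipode (R := k) b * antipode (R := k) a := by
  calc antipode (R := k) (a * b)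
      = ∑ j ∈ rb.index, ∑ i ∈ ra.index,
          (counit (R := k) (ra.right i) * counit (R := k) (rb.right j)) •
            antipode (R := k) (ra.left i * rb.left j) := by
        conv_lhs => rw [← sum_smul_counit ra, ← sum_smul_counit rb]
        rw [Finset.sum_mul_sum]
        simp only [map_sum]
        rw [Finset.sum_comm]
        exact Finset.sum_congr rfl fun j _ => Finset.sum_congr rfl fun i _ => by
          simp [smul_mul_assoc, mul_smul_comm, smul_smul, mul_comm]
    _ = ∑ j ∈ rb.index, ∑ i ∈ ra.index, ∑ m ∈ (ra' i).index, ∑ n ∈ (rb' j).index,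
          antipode (R := k) (ra.left i * rb.left j) *
            ((ra' i).left m * ((rb' j).left n *
              (antipode (R := k) ((rb' j).right n) *
                antipode (R := k) ((ra' i).right m)))) := by
        exact Finset.sum_congr rfl fun j _ => Finset.sum_congr rfl fun i _ =>
          (inner_eps _ (ra' i) (rb' j)).symm
    _ = ∑ j ∈ rb.index, ∑ n ∈ (rb' j).index, ∑ i ∈ ra.index, ∑ m ∈ (ra' i).index,
          antipode (R := k) (ra.left i * rb.left j) *
            ((ra' i).left m * ((rb' j).left n *
              (antipode (R := k) ((rb' j).right n) *
                antipode (R := k) ((ra' i).right m)))) := by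
        refine Finset.sum_congr rfl fun j _ => ?_
        rw [show (∑ i ∈ ra.index, ∑ m ∈ (ra' i).index, ∑ n ∈ (rb' j).index, _)
            = ∑ i ∈ ra.index, ∑ n ∈ (rb' j).index, ∑ m ∈ (ra' i).index,
              antipode (R := k) (ra.left i * rb.left j) *
                ((ra' i).left m * ((rb' j).left n *
                  (antipode (R := k) ((rb' j).right n) *
                    antipode (R := k) ((ra' i).right m))))
          from Finset.sum_congr rfl fun i _ => Finset.sum_comm]
        exact Finset.sum_comm
    _ = ∑ j ∈ rb.index, ∑ n ∈ (rb' j).index, ∑ i ∈ ra.index, ∑ m ∈ (la i).index,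
          antipode (R := k) ((la i).left m * rb.left j) *
            ((la i).right m * ((rb' j).left n *
              (antipode (R := k) ((rb' j).right n) *
                antipode (R := k) (ra.right i)))) := by
        refine Finset.sum_congr rfl fun j _ => Finset.sum_congr rfl fun n _ => ?_
        have t := sum_tmul_tmul_eq (R := k) ra la ra'
        have h2 := congrArg (tri (antipode (R := k) ∘ₗ LinearMap.mulRight k (rb.left j))
            LinearMap.id
            (LinearMap.mulLeft k ((rb' j).left n) ∘ₗ
              LinearMap.mulLeft k (antipode (R := k) ((rb' j).right n)) ∘ₗ
                antipode (R := k))) t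
        simpa [map_sum, mul_assoc] using h2.symm
    _ = ∑ i ∈ ra.index, ∑ m ∈ (la i).index, ∑ j ∈ rb.index, ∑ n ∈ (rb' j).index,
          antipode (R := k) ((la i).left m * rb.left j) *
            ((la i).right m * ((rb' j).left n *
              (antipode (R := k) ((rb' j).right n) *
                antipode (R := k) (ra.right i)))) := by
        rw [show (∑ j ∈ rb.index, ∑ n ∈ (rb' j).index, ∑ i ∈ ra.index, ∑ m ∈ (la i).index, _)
            = ∑ j ∈ rb.index, ∑ i ∈ ra.index, ∑ m ∈ (la i).index, ∑ n ∈ (rb' j).index,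
              antipode (R := k) ((la i).left m * rb.left j) *
                ((la i).right m * ((rb' j).left n *
                  (antipode (R := k) ((rb' j).right n) *
                    antipode (R := k) (ra.right i))))
          from Finset.sum_congr rfl fun j _ => by
            rw [Finset.sum_comm]
            exact Finset.sum_congr rfl fun i _ => Finset.sum_comm]
        rw [Finset.sum_comm]
        exact Finset.sum_congr rfl fun i _ => Finset.sum_comm
    _ = ∑ i ∈ ra.index, ∑ m ∈ (la i).index, ∑ j ∈ rb.index, ∑ n ∈ (lb j).index,
          antipode (R := k) ((la i).left m * (lb j).left n) *
            ((la i).right m * ((lb j).right n *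
              (antipode (R := k) (rb.right j) * antipode (R := k) (ra.right i)))) := by
        refine Finset.sum_congr rfl fun i _ => Finset.sum_congr rfl fun m _ => ?_
        have t := sum_tmul_tmul_eq (R := k) rb lb rb'
        have h2 := congrArg (tri (antipode (R := k) ∘ₗ LinearMap.mulLeft k ((la i).left m))
            (LinearMap.mulLeft k ((la i).right m))
            (LinearMap.mulRight k (antipode (R := k) (ra.right i)) ∘ₗ
              antipode (R := k))) t
        simpa [map_sum, mul_assoc] using h2.symm
    _ = ∑ i ∈ ra.index, ∑ j ∈ rb.index, ∑ m ∈ (la i).index, ∑ n ∈ (lb j).index,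
          antipode (R := k) ((la i).left m * (lb j).left n) *
            ((la i).right m * ((lb j).right n *
              (antipode (R := k) (rb.right j) * antipode (R := k) (ra.right i)))) := by
        exact Finset.sum_congr rfl fun i _ => Finset.sum_comm
    _ = ∑ i ∈ ra.index, ∑ j ∈ rb.index,
          (counit (R := k) (ra.left i) * counit (R := k) (rb.left j)) •
            (antipode (R := k) (rb.right j) * antipode (R := k) (ra.right i)) := by
        exact Finset.sum_congr rfl fun i _ => Finset.sum_congr rfl fun j _ =>
          inner_eps2 _ (la i) (lb j)
    _ = antipode (R := k) b * antipode (R := k) a := by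
        conv_rhs => rw [← sum_counit_smul ra, ← sum_counit_smul rb]
        rw [map_sum, map_sum, Finset.sum_mul_sum, Finset.sum_comm]
        exact Finset.sum_congr rfl fun i _ => Finset.sum_congr rfl fun j _ => by
          simp [smul_mul_assoc, mul_smul_comm, smul_smul, mul_comm]

theorem antipode_mul_antidistrib (a b : H) :
    antipode (R := k) (a * b) = antipode (R := k) b * antipode (R := k) a :=
  antipode_mul_antidistrib_aux (ℛ k a) (ℛ k b) (fun _ => ℛ k _) (fun _ => ℛ k _)
    (fun _ => ℛ k _) (fun _ => ℛ k _)

/-! ### The convolution algebra on `H →ₗ[k] H` -/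

/-- Convolution product on `H →ₗ[k] H`. -/
noncomputable def conv (f g : H →ₗ[k] H) : H →ₗ[k] H :=
  LinearMap.mul' k H ∘ₗ map f g ∘ₗ Coalgebra.comul

lemma conv_repr (f g : H →ₗ[k] H) {ι : Type*} {x : H} (r : Repr k x ι) :
    conv f g x = ∑ i ∈ r.index, f (r.left i) * g (r.right i) := by
  have h0 : conv f g x = LinearMap.mul' k H (map f g (Coalgebra.comul x)) := rfl
  rw [h0, ← r.eq, map_sum, map_sum]
  simp

/-- The unit of the convolution algebra. -/
noncomputable def uE : H →ₗ[k] H := Algebra.linearMap k H ∘ₗ Coalgebra.counit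

lemma uE_apply (x : H) : (uE : H →ₗ[k] H) x = counit (R := k) x • 1 := by
  simp [uE, Algebra.algebraMap_eq_smul_one]

variable (δ : H →ₐ[k] k)

noncomputable def uD : H →ₗ[k] H := Algebra.linearMap k H ∘ₗ δ.toLinearMap

lemma uD_apply (x : H) : uD δ x = δ x • 1 := by
  simp [uD, Algebra.algebraMap_eq_smul_one]

noncomputable def uDbar : H →ₗ[k] H :=
  Algebra.linearMap k H ∘ₗ δ.toLinearMap ∘ₗ antipode (R := k)

lemma uDbar_apply (x : H) : uDbar δ x = δ (antipode (R := k) x) • 1 := by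
  simp [uDbar, Algebra.algebraMap_eq_smul_one]

lemma conv_assoc (f g h : H →ₗ[k] H) : conv (conv f g) h = conv f (conv g h) := by
  refine LinearMap.ext fun x => ?_
  set r := ℛ k x
  set la : ∀ i, Repr k (r.left i) (H × H) := fun i => ℛ k _ with hla
  set ra' : ∀ i, Repr k (r.right i) (H × H) := fun i => ℛ k _ with hra'
  have t := congrArg (tri f g h) (sum_tmul_tmul_eq (R := k) r la ra')
  simp only [map_sum, tri_tmul] at t
  calc conv (conv f g) h x
      = ∑ i ∈ r.index, conv f g (r.left i) * h (r.right i) := conv_repr _ _ r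
    _ = ∑ i ∈ r.index, ∑ m ∈ (la i).index,
          f ((la i).left m) * (g ((la i).right m) * h (r.right i)) := by
        refine Finset.sum_congr rfl fun i _ => ?_
        rw [conv_repr f g (la i), Finset.sum_mul]
        exact Finset.sum_congr rfl fun m _ => mul_assoc _ _ _
    _ = ∑ i ∈ r.index, ∑ m ∈ (ra' i).index,
          f (r.left i) * (g ((ra' i).left m) * h ((ra' i).right m)) := t
    _ = ∑ i ∈ r.index, f (r.left i) * conv g h (r.right i) := by
        refine Finset.sum_congr rfl fun i _ => ?_
        rw [conv_repr g h (ra' i), Finset.mul_sum]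
    _ = conv f (conv g h) x := (conv_repr _ _ r).symm

lemma conv_uE_left (f : H →ₗ[k] H) : conv uE f = f := by
  refine LinearMap.ext fun x => ?_
  rw [conv_repr _ _ (ℛ k x)]
  have h1 : ∀ i ∈ (ℛ k x).index, uE ((ℛ k x).left i) * f ((ℛ k x).right i)
      = f (counit (R := k) ((ℛ k x).left i) • (ℛ k x).right i) := fun i _ => by
    rw [uE_apply (k := k), smul_mul_assoc, one_mul, map_smul]
  rw [Finset.sum_congr rfl h1, ← map_sum, sum_counit_smul]

lemma conv_uE_right (f : H →ₗ[k] H) : conv f uE = f := by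
  refine LinearMap.ext fun x => ?_
  rw [conv_repr _ _ (ℛ k x)]
  have h1 : ∀ i ∈ (ℛ k x).index, f ((ℛ k x).left i) * uE ((ℛ k x).right i)
      = f (counit (R := k) ((ℛ k x).right i) • (ℛ k x).left i) := fun i _ => by
    rw [uE_apply (k := k), mul_smul_comm, mul_one, map_smul]
  rw [Finset.sum_congr rfl h1, ← map_sum, sum_smul_counit]

lemma conv_antipode_id : conv (antipode (R := k)) LinearMap.id = (uE : H →ₗ[k] H) := by
  refine LinearMap.ext fun x => ?_
  rw [conv_repr _ _ (ℛ k x)]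
  simp only [LinearMap.id_apply]
  rw [sum_antipode_mul_eq_algebraMap_counit (R := k) (ℛ k x), uE_apply, Algebra.algebraMap_eq_smul_one]

lemma conv_id_antipode : conv LinearMap.id (antipode (R := k)) = (uE : H →ₗ[k] H) := by
  refine LinearMap.ext fun x => ?_
  rw [conv_repr _ _ (ℛ k x)]
  simp only [LinearMap.id_apply]
  rw [sum_mul_antipode_eq_algebraMap_counit (R := k) (ℛ k x), uE_apply, Algebra.algebraMap_eq_smul_one]

lemma conv_uDbar_uD : conv (uDbar δ) (uD δ) = (uE : H →ₗ[k] H) := by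
  refine LinearMap.ext fun x => ?_
  rw [conv_repr _ _ (ℛ k x)]
  have h1 : ∀ i ∈ (ℛ k x).index, uDbar δ ((ℛ k x).left i) * uD δ ((ℛ k x).right i)
      = δ (antipode (R := k) ((ℛ k x).left i) * (ℛ k x).right i) • (1 : H) := fun i _ => by
    rw [uDbar_apply, uD_apply, smul_mul_assoc, one_mul, smul_smul, ← map_mul]
  rw [Finset.sum_congr rfl h1, ← Finset.sum_smul, ← map_sum, sum_antipode_mul_eq_algebraMap_counit (R := k) (ℛ k x),
    AlgHom.commutes, uE_apply]
  simp [Algebra.algebraMap_eq_smul_one]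

lemma twisted_repr {ι : Type*} {x : H} (r : Repr k x ι) :
    twistedAntipode δ x = ∑ i ∈ r.index, δ (r.left i) • antipode (R := k) (r.right i) := by
  have h0 : twistedAntipode δ x
      = TensorProduct.lid k H
          (map δ.toLinearMap (antipode (R := k)) (Coalgebra.comul x)) := rfl
  rw [h0, ← r.eq, map_sum, map_sum]
  simp

lemma twistedAntipode_eq_conv : twistedAntipode δ = conv (uD δ) (antipode (R := k)) := by
  refine LinearMap.ext fun x => ?_
  rw [twisted_repr δ (ℛ k x), conv_repr _ _ (ℛ k x)]
  exact Finset.sum_congr rfl fun i _ => by rw [uD_apply, smul_mul_assoc, one_mul]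

lemma twisted_one : twistedAntipode δ (1 : H) = 1 := by
  have h0 : twistedAntipode δ (1 : H)
      = TensorProduct.lid k H
          (map δ.toLinearMap (antipode (R := k)) (Coalgebra.comul (1 : H))) := rfl
  rw [h0, Bialgebra.comul_one, Algebra.TensorProduct.one_def]
  simp [antipode_one]

lemma twisted_antimul (x y : H) :
    twistedAntipode δ (x * y) = twistedAntipode δ y * twistedAntipode δ x := by
  rw [twisted_repr δ (reprMul (ℛ k x) (ℛ k y))]
  simp only [reprMul]
  rw [Finset.sum_product, twisted_repr δ (ℛ k y), twisted_repr δ (ℛ k x),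
    Finset.sum_mul_sum, Finset.sum_comm]
  exact Finset.sum_congr rfl fun j _ => Finset.sum_congr rfl fun i _ => by
    rw [map_mul, antipode_mul_antidistrib]
    simp [smul_mul_assoc, mul_smul_comm, smul_smul, mul_comm]

/-- The map `h ↦ Σ S_δ(h₍₁₎) h₍₀₎`. -/
noncomputable def Tmap : H →ₗ[k] H :=
  LinearMap.mul' k H ∘ₗ (twistedAntipode δ).rTensor H ∘ₗ
    (TensorProduct.comm k H H).toLinearMap ∘ₗ Coalgebra.comul

lemma Tmap_apply (x : H) :
    Tmap δ x = LinearMap.mul' k H ((twistedAntipode δ).rTensor H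
      ((TensorProduct.comm k H H) (Coalgebra.comul x))) := rfl

lemma Tmap_repr {ι : Type*} {x : H} (r : Repr k x ι) :
    Tmap δ x = ∑ i ∈ r.index, twistedAntipode δ (r.right i) * r.left i := by
  rw [Tmap_apply, ← r.eq, map_sum, map_sum, map_sum]
  simp

lemma conv_tw_twtw (x : H) :
    conv (twistedAntipode δ) (twistedAntipode δ ∘ₗ twistedAntipode δ) x
      = twistedAntipode δ (Tmap δ x) := by
  rw [conv_repr _ _ (ℛ k x), Tmap_repr δ (ℛ k x), map_sum]
  exact Finset.sum_congr rfl fun i _ => by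
    rw [LinearMap.comp_apply]
    exact (twisted_antimul δ _ _).symm

lemma conv_tw_id : conv (twistedAntipode δ) LinearMap.id = uD δ := by
  rw [twistedAntipode_eq_conv, conv_assoc, conv_antipode_id, conv_uE_right]

end Crainic

/-- (Crainic's lemma) `S_δ ∘ S_δ = id` iff `Σ S_δ(h₍₁₎) h₍₀₎ = δ(h)·1` for all `h`. -/
theorem twistedAntipode_involutive_iff {k H : Type*} [Field k] [Ring H]
    [HopfAlgebra k H] (δ : H →ₐ[k] k) :
    twistedAntipode δ ∘ₗ twistedAntipode δ = LinearMap.id ↔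
      ∀ h : H, LinearMap.mul' k H ((twistedAntipode δ).rTensor H
          ((TensorProduct.comm k H H) (Coalgebra.comul h))) = δ h • (1 : H) := by
  open Coalgebra HopfAlgebra Crainic in
  constructor
  · intro hid h
    rw [← Tmap_apply, Tmap_repr δ (ℛ k h)]
    calc ∑ i ∈ (ℛ k h).index, twistedAntipode δ ((ℛ k h).right i) * (ℛ k h).left i
        = ∑ i ∈ (ℛ k h).index,
            twistedAntipode δ (twistedAntipode δ ((ℛ k h).left i) * (ℛ k h).right i) := by
          refine Finset.sum_congr rfl fun i _ => ?_
          rw [twisted_antimul]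
          rw [show twistedAntipode δ (twistedAntipode δ ((ℛ k h).left i)) = (ℛ k h).left i
            from LinearMap.congr_fun hid _]
      _ = twistedAntipode δ
            (∑ i ∈ (ℛ k h).index, twistedAntipode δ ((ℛ k h).left i) * (ℛ k h).right i) :=
          (map_sum _ _ _).symm
      _ = twistedAntipode δ (conv (twistedAntipode δ) LinearMap.id h) := by
          rw [conv_repr _ _ (ℛ k h)]; simp
      _ = twistedAntipode δ (uD δ h) := by rw [conv_tw_id]
      _ = δ h • 1 := by rw [uD_apply, map_smul, twisted_one]
  · intro hT
    have h1 : conv (twistedAntipode δ) (twistedAntipode δ ∘ₗ twistedAntipode δ) = uD δ := by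
      refine LinearMap.ext fun x => ?_
      rw [conv_tw_twtw, show Tmap δ x = δ x • 1 from (Tmap_apply δ x).trans (hT x),
        map_smul, twisted_one, uD_apply]
    have hL : conv (conv LinearMap.id (uDbar δ)) (twistedAntipode δ) = uE := by
      rw [twistedAntipode_eq_conv, conv_assoc, ← conv_assoc (uDbar δ), conv_uDbar_uD,
        conv_uE_left, conv_id_antipode]
    calc twistedAntipode δ ∘ₗ twistedAntipode δ
        = conv uE (twistedAntipode δ ∘ₗ twistedAntipode δ) := (conv_uE_left _).symm
      _ = conv (conv (conv LinearMap.id (uDbar δ)) (twistedAntipode δ))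
            (twistedAntipode δ ∘ₗ twistedAntipode δ) := by rw [hL]
      _ = conv (conv LinearMap.id (uDbar δ))
            (conv (twistedAntipode δ) (twistedAntipode δ ∘ₗ twistedAntipode δ)) :=
          conv_assoc _ _ _
      _ = conv (conv LinearMap.id (uDbar δ)) (conv (twistedAntipode δ) LinearMap.id) := by
          rw [h1, conv_tw_id]
      _ = conv (conv (conv LinearMap.id (uDbar δ)) (twistedAntipode δ)) LinearMap.id :=
          (conv_assoc _ _ _).symm
      _ = conv uE LinearMap.id := by rw [hL]
      _ = LinearMap.id := conv_uE_left _
end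

section
/- Let (R, δ) be a ℤ/2-graded associative algebra with odd derivation δ, δ² = 0, and let A ∈ R be an odd element with curvature F = δA + A². Suppose F is nilpotent (or work in a completion where exp converges), and set e^{−F} = Σ_{n≥0} (−1)ⁿ Fⁿ/n!. Then δ(e^{−F}) = [e^{−F}, A] = e^{−F}A − A e^{−F}. -/
/-- For an odd connection form `A` with curvature `F = δA + A²` in a ℤ/2-graded algebra
with odd differential `δ` (`δ² = 0`, graded Leibniz rules), if `F` is nilpotent so that
the exponential `e^{−F} = Σ (−1)ⁿ Fⁿ/n!` is a finite sum, then
`δ(e^{−F}) = [e^{−F}, A] = e^{−F}A − A e^{−F}`. -/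
theorem delta_exp_curvature {R : Type*} [Ring R] [Algebra ℚ R] (δ : R →ₗ[ℚ] R)
    (Ev Od : R → Prop)
    (hd2 : ∀ x : R, δ (δ x) = 0)
    (hE1 : Ev 1)
    (hEmul : ∀ x y : R, Ev x → Ev y → Ev (x * y))
    (hLeibE : ∀ x y : R, Ev x → δ (x * y) = δ x * y + x * δ y)
    (hLeibO : ∀ x y : R, Od x → δ (x * y) = δ x * y - x * δ y)
    (A : R) (hA : Od A) (hF : Ev (δ A + A * A))
    (N : ℕ) (hN : (δ A + A * A) ^ N = 0) :
    δ (∑ n ∈ Finset.range N, ((-1 : ℚ) ^ n * (n.factorial : ℚ)⁻¹) • (δ A + A * A) ^ n) =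
      (∑ n ∈ Finset.range N, ((-1 : ℚ) ^ n * (n.factorial : ℚ)⁻¹) • (δ A + A * A) ^ n) * A -
        A * ∑ n ∈ Finset.range N, ((-1 : ℚ) ^ n * (n.factorial : ℚ)⁻¹) • (δ A + A * A) ^ n := by
  set F : R := δ A + A * A with hFdef
  -- δ kills 1
  have hd1 : δ (1 : R) = 0 := by
    have h : δ (1:R) = δ 1 + δ 1 := by simpa using hLeibE 1 1 hE1
    exact left_eq_add.mp h
  -- Bianchi identity
  have hBianchi : δ F = F * A - A * F := by
    have h1 : δ F = δ (δ A) + δ (A * A) := by rw [hFdef, map_add]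
    rw [h1, hd2, hLeibO A A hA, zero_add, hFdef]
    noncomm_ring
  -- powers of F are even
  have hFpow : ∀ n : ℕ, Ev (F ^ n) := by
    intro n
    induction n with
    | zero => simpa using hE1
    | succ k ih => rw [pow_succ]; exact hEmul _ _ ih hF
  -- δ(Fⁿ) = FⁿA − AFⁿ
  have hkey : ∀ n : ℕ, δ (F ^ n) = F ^ n * A - A * F ^ n := by
    intro n
    induction n with
    | zero => simp [hd1]
    | succ k ih =>
      rw [pow_succ', hLeibE F (F ^ k) hF, hBianchi, ih]
      noncomm_ring
  rw [map_sum]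
  rw [Finset.sum_mul, Finset.mul_sum, ← Finset.sum_sub_distrib]
  refine Finset.sum_congr rfl fun n _ => ?_
  rw [map_smul, hkey n, smul_sub, smul_mul_assoc, mul_smul_comm]
end

section
/- Let A be an associative algebra and ΩA the noncommutative forms with operators b, d, κ = 1 − (db+bd), B = (Σ_{i=0}^{n} κⁱ)d on ΩⁿA. Then κ B = B = B κ. -/
/-- The Karoubi operator `κ = 1 − (db + bd)`. -/
def kappaOp {Ω : Type*} [Ring Ω] (d b : Ω →+ Ω) : Ω → Ω :=
  fun x => x - (d (b x) + b (d x))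

/-- Connes' boundary map `B = (1 + κ + … + κⁿ) ∘ d` on forms of degree `n`. -/
def connesB {Ω : Type*} [Ring Ω] (d b : Ω →+ Ω) (n : ℕ) (x : Ω) : Ω :=
  ∑ i ∈ Finset.range (n + 1), (kappaOp d b)^[i] (d x)

section Aux

variable {Ω : Type*} [Ring Ω] (d b : Ω →+ Ω)

lemma kappa_add (x y : Ω) : kappaOp d b (x + y) = kappaOp d b x + kappaOp d b y := by
  simp only [kappaOp, map_add]; abel

lemma kappa_neg (x : Ω) : kappaOp d b (-x) = - kappaOp d b x := by
  simp only [kappaOp, map_neg]; abel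

lemma kappa_zero : kappaOp d b 0 = 0 := by simp [kappaOp]

lemma kappa_zsmul (z : ℤ) (x : Ω) : kappaOp d b (z • x) = z • kappaOp d b x := by
  simp only [kappaOp, map_zsmul, smul_sub, smul_add]

lemma kiter_add (k : ℕ) (x y : Ω) :
    (kappaOp d b)^[k] (x + y) = (kappaOp d b)^[k] x + (kappaOp d b)^[k] y := by
  induction k generalizing x y with
  | zero => rfl
  | succ k ih => simp only [Function.iterate_succ_apply, kappa_add, ih]

lemma kiter_neg (k : ℕ) (x : Ω) : (kappaOp d b)^[k] (-x) = - (kappaOp d b)^[k] x := by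
  induction k generalizing x with
  | zero => rfl
  | succ k ih => simp only [Function.iterate_succ_apply, kappa_neg, ih]

lemma kiter_zero (k : ℕ) : (kappaOp d b)^[k] (0 : Ω) = 0 := by
  induction k with
  | zero => rfl
  | succ k ih => simp only [Function.iterate_succ_apply, kappa_zero, ih]

lemma kiter_zsmul (k : ℕ) (z : ℤ) (x : Ω) :
    (kappaOp d b)^[k] (z • x) = z • (kappaOp d b)^[k] x := by
  induction k generalizing x with
  | zero => rfl
  | succ k ih => simp only [Function.iterate_succ_apply, kappa_zsmul, ih]

lemma kappa_sum {ι : Type*} (s : Finset ι) (f : ι → Ω) :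
    kappaOp d b (∑ i ∈ s, f i) = ∑ i ∈ s, kappaOp d b (f i) := by
  classical
  induction s using Finset.induction with
  | empty => simp [kappa_zero]
  | insert _ _ h ih => simp only [Finset.sum_insert h, kappa_add, ih]

lemma d_kappa (hd2 : ∀ x : Ω, d (d x) = 0) (x : Ω) :
    d (kappaOp d b x) = kappaOp d b (d x) := by
  simp only [kappaOp, map_sub, map_add, hd2, map_zero]
  abel

lemma kappa_formula {M : ℕ → AddSubgroup Ω}
    (hd : ∀ {n : ℕ} {x : Ω}, x ∈ M n → d x ∈ M (n + 1))
    (hd2 : ∀ x : Ω, d (d x) = 0)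
    (hLeib : ∀ {n : ℕ} (x y : Ω), x ∈ M n → d (x * y) = d x * y + ((-1 : ℤ) ^ n) • (x * d y))
    (hbdef : ∀ {n : ℕ} (x a : Ω), x ∈ M n → a ∈ M 0 →
      b (x * d a) = ((-1 : ℤ) ^ n) • (x * a - a * x))
    {n : ℕ} {x a : Ω} (hx : x ∈ M n) (ha : a ∈ M 0) :
    kappaOp d b (x * d a) = ((-1 : ℤ) ^ n) • (d a * x) := by
  have hda : d (x * d a) = d x * d a := by
    rw [hLeib x (d a) hx, hd2, mul_zero, smul_zero, add_zero]
  have h2 : b (d (x * d a)) = ((-1 : ℤ) ^ (n + 1)) • (d x * a - a * d x) := by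
    rw [hda]; exact hbdef (d x) a (hd hx) ha
  have h3 : d (b (x * d a)) =
      ((-1 : ℤ) ^ n) • ((d x * a + ((-1 : ℤ) ^ n) • (x * d a)) - (d a * x + a * d x)) := by
    rw [hbdef x a hx ha, map_zsmul, map_sub, hLeib x a hx, hLeib a x ha]
    simp
  have he : ((-1 : ℤ) ^ n) * ((-1 : ℤ) ^ n) = 1 := by
    rw [← pow_add]; exact Even.neg_one_pow ⟨n, rfl⟩
  show x * d a - (d (b (x * d a)) + b (d (x * d a))) = _
  rw [h3, h2, pow_succ]
  simp only [smul_sub, smul_add, smul_smul, he, one_smul, mul_neg, mul_one, neg_smul]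
  abel

end Aux

/-- In the graded algebra `Ω` of noncommutative differential forms over an algebra
(degree-`n` part `M n`, with `ΩⁿA = Ã ⊗ A^{⊗n}` spanned by forms `ω da` with
`ω ∈ M n`, `a ∈ M 0`), the universal differential `d` (with `d² = 0` and the graded
Leibniz rule) and the Hochschild operator `b` (with `b = 0` in degree `0` and
`b(ω da) = (−1)ⁿ[ω, a]`) satisfy `κB = B = Bκ`, where
`B = (1 + κ + … + κⁿ)d` is Connes' boundary and `κ = 1 − (db + bd)`. -/
theorem kappa_B_eq_B {Ω : Type*} [Ring Ω] (M : ℕ → AddSubgroup Ω) (d b : Ω →+ Ω)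
    (h1 : (1 : Ω) ∈ M 0)
    (hmul : ∀ {i j : ℕ} {x y : Ω}, x ∈ M i → y ∈ M j → x * y ∈ M (i + j))
    (hd : ∀ {n : ℕ} {x : Ω}, x ∈ M n → d x ∈ M (n + 1))
    (hb : ∀ {n : ℕ} {x : Ω}, x ∈ M (n + 1) → b x ∈ M n)
    (hd2 : ∀ x : Ω, d (d x) = 0)
    (hLeib : ∀ {n : ℕ} (x y : Ω), x ∈ M n → d (x * y) = d x * y + ((-1 : ℤ) ^ n) • (x * d y))
    (hb0 : ∀ x ∈ M 0, b x = 0)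
    (hbdef : ∀ {n : ℕ} (x a : Ω), x ∈ M n → a ∈ M 0 →
      b (x * d a) = ((-1 : ℤ) ^ n) • (x * a - a * x))
    (hspan : ∀ n : ℕ, (M (n + 1) : Set Ω) ⊆
      ↑(AddSubgroup.closure {z : Ω | ∃ x ∈ M n, ∃ a ∈ M 0, z = x * d a})) :
    (∀ (n : ℕ) (x : Ω), x ∈ M n → kappaOp d b (connesB d b n x) = connesB d b n x) ∧
    (∀ (n : ℕ) (x : Ω), x ∈ M n → connesB d b n (kappaOp d b x) = connesB d b n x) := by
  -- the key cyclic lemma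
  have keyK : ∀ (n m : ℕ) (ω y : Ω), ω ∈ M m → y ∈ M n →
      (kappaOp d b)^[n + 1] (ω * d y)
        = ((-1 : ℤ) ^ ((n + 1) * (m + n))) • (d y * ω) := by
    intro n
    induction n with
    | zero =>
      intro m ω y hω hy
      simpa using kappa_formula (M := M) d b hd hd2 hLeib hbdef hω hy
    | succ n ih =>
      intro m ω y hω hy
      have hy' := hspan n hy
      refine AddSubgroup.closure_induction
        (p := fun y _ => (kappaOp d b)^[n + 1 + 1] (ω * d y)
          = ((-1 : ℤ) ^ ((n + 1 + 1) * (m + (n + 1)))) • (d y * ω)) ?_ ?_ ?_ ?_ hy'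
      · rintro w ⟨z, hz, c, hc, rfl⟩
        have hdw : d (z * d c) = d z * d c := by
          rw [hLeib z (d c) hz, hd2, mul_zero, smul_zero, add_zero]
        have hωdz : ω * d z ∈ M (m + (n + 1)) := hmul hω (hd hz)
        have hdcω : d c * ω ∈ M (m + 1) := by
          have := hmul (hd hc) hω
          rwa [add_comm] at this
        have step1 : kappaOp d b (ω * d (z * d c))
            = ((-1 : ℤ) ^ (m + (n + 1))) • (d c * (ω * d z)) := by
          rw [hdw, ← mul_assoc]
          exact kappa_formula (M := M) d b hd hd2 hLeib hbdef hωdz hc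
        have step2 : (kappaOp d b)^[n + 1] ((d c * ω) * d z)
            = ((-1 : ℤ) ^ ((n + 1) * ((m + 1) + n))) • (d z * (d c * ω)) :=
          ih (m + 1) (d c * ω) z hdcω hz
        rw [Function.iterate_succ_apply, step1, kiter_zsmul, ← mul_assoc, step2,
          smul_smul, ← pow_add, hdw]
        rw [show (m + (n + 1)) + (n + 1) * ((m + 1) + n) = (n + 1 + 1) * (m + (n + 1)) by ring]
        rw [mul_assoc]
      · simp [kiter_zero]
      · intro y₁ y₂ _ _ hy₁ hy₂
        simp only [map_add, mul_add, kiter_add, smul_add, hy₁, hy₂, add_mul]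
      · intro y₀ _ hy₀
        simp only [map_neg, mul_neg, kiter_neg, hy₀, neg_mul, smul_neg]
  -- fixed point: κ^[n+1] (d x) = d x for x ∈ M n
  have hfix : ∀ (n : ℕ) (x : Ω), x ∈ M n → (kappaOp d b)^[n + 1] (d x) = d x := by
    intro n x hx
    have h := keyK n 0 1 x h1 hx
    have hev : Even ((n + 1) * (0 + n)) := by
      simp only [Nat.zero_add]
      rw [Nat.mul_comm]; exact Nat.even_mul_succ_self n
    rw [one_mul, mul_one, hev.neg_one_pow, one_smul] at h
    exact h
  -- the shifted sum equals the original sum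
  have key : ∀ (n : ℕ) (x : Ω), x ∈ M n →
      ∑ i ∈ Finset.range (n + 1), (kappaOp d b)^[i + 1] (d x) = connesB d b n x := by
    intro n x hx
    unfold connesB
    rw [Finset.sum_range_succ, Finset.sum_range_succ']
    simp [hfix n x hx]
  constructor
  · intro n x hx
    have h1' : kappaOp d b (connesB d b n x)
        = ∑ i ∈ Finset.range (n + 1), (kappaOp d b)^[i + 1] (d x) := by
      unfold connesB
      rw [kappa_sum]
      refine Finset.sum_congr rfl fun i _ => ?_
      rw [Function.iterate_succ_apply']
    rw [h1', key n x hx]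
  · intro n x hx
    have h2' : connesB d b n (kappaOp d b x)
        = ∑ i ∈ Finset.range (n + 1), (kappaOp d b)^[i + 1] (d x) := by
      unfold connesB
      refine Finset.sum_congr rfl fun i _ => ?_
      rw [d_kappa d b hd2, Function.iterate_succ_apply]
    rw [h2', key n x hx]
end
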